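/- Let L be a nondegenerate lattice and G a finite group acting on L by isometries. Suppose u ∈ L^G is primitive in L^G, v ∈ L_G, and p is a prime such that u + v ∈ p·L. Then p divides |G|. (This is the key divisibility claim proved inside Lemma 8.1: the orbit sum of w = (u+v)/p equals (|G|/p)·u, since the orbit sum of v lies in L^G ∩ L_G = {0}, and primitivity of u forces |G|/p ∈ ℤ.) -/

import Mathlib

/-- The Gram matrix of a bilinear form `B` with respect to a family of vectors `v`. -/
def gramMatrix {L : Type*} [AddCommGroup L] [Module ℤ L]
    (B : L →ₗ[ℤ] L →ₗ[ℤ] ℤ) {ι : Type*} (v : ι → L) : Matrix ι ι ℤ :=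
  Matrix.of fun i j => B (v i) (v j)

/-- The invariant sublattice `L^G = {x ∈ L : g • x = x for all g ∈ G}` of a `G`-action
on `L` given by `ρ`. -/
def invariantLattice {L : Type*} [AddCommGroup L] [Module ℤ L]
    {G : Type*} [Group G] (ρ : G →* (L ≃ₗ[ℤ] L)) : Submodule ℤ L where
  carrier := {x | ∀ g : G, ρ g x = x}
  add_mem' := by
    intro a b ha hb g
    rw [map_add, ha g, hb g]
  zero_mem' := by
    intro g
    simp
  smul_mem' := by
    intro c x hx g
    rw [(ρ g).map_smul c x, hx g]

/-- The coinvariant sublattice `L_G = {x ∈ L : B x y = 0 for all y ∈ L^G}`. -/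
def coinvariantLattice {L : Type*} [AddCommGroup L] [Module ℤ L]
    {G : Type*} [Group G] (B : L →ₗ[ℤ] L →ₗ[ℤ] ℤ) (ρ : G →* (L ≃ₗ[ℤ] L)) :
    Submodule ℤ L where
  carrier := {x | ∀ y ∈ invariantLattice ρ, B x y = 0}
  add_mem' := by
    intro a b ha hb y hy
    rw [map_add, LinearMap.add_apply, ha y hy, hb y hy, add_zero]
  zero_mem' := by
    intro y hy
    rw [map_zero, LinearMap.zero_apply]
  smul_mem' := by
    intro c x hx y hy
    rw [B.map_smul c x, LinearMap.smul_apply, hx y hy, smul_zero]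

/-- Let `L` be a nondegenerate lattice with a finite group `G` acting by
isometries.  If `u ∈ L^G` is primitive in `L^G`, `v ∈ L_G`, and `p` is a prime with
`u + v ∈ p·L`, then `p` divides `|G|`. -/
theorem prime_dvd_card_of_sum_in_p_mul_lattice
    {L : Type*} [AddCommGroup L] [Module ℤ L]
    {G : Type*} [Group G] [Finite G]
    (B : L →ₗ[ℤ] L →ₗ[ℤ] ℤ) (hsymm : ∀ x y : L, B x y = B y x)
    (ρ : G →* (L ≃ₗ[ℤ] L)) (hisom : ∀ (g : G) (x y : L), B (ρ g x) (ρ g y) = B x y)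
    {ι : Type*} [Fintype ι] [DecidableEq ι] (bL : Module.Basis ι ℤ L)
    (hdet : (gramMatrix B (fun i => bL i)).det ≠ 0)
    (p : ℕ) (hp : p.Prime)
    (u : L) (hu : u ∈ invariantLattice ρ) (hu0 : u ≠ 0)
    (hprim : ∀ m : ℤ, 0 < m → ∀ u' ∈ invariantLattice ρ, u = m • u' → m = 1)
    (v : L) (hv : v ∈ coinvariantLattice B ρ)
    (hw : ∃ w : L, u + v = (p : ℤ) • w) :
    p ∣ Nat.card G := by
  classical
  have hMod : ‹Module ℤ L› = AddCommGroup.toIntModule L :=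
    (AddCommGroup.uniqueIntModule (M := L)).uniq _
  subst hMod
  have : Fintype G := Fintype.ofFinite G
  obtain ⟨w, hw⟩ := hw
  -- nondegeneracy
  have hnd : ∀ x : L, (∀ y : L, B x y = 0) → x = 0 := by
    intro x hx
    have hrep : ∑ i, bL.equivFun x i • bL i = x := bL.sum_equivFun x
    have hcoord : Matrix.vecMul (fun i => bL.equivFun x i) (gramMatrix B (fun i => bL i)) = 0 := by
      funext j
      have h0 : B x (bL j) = 0 := hx _
      rw [← hrep] at h0
      simp only [map_sum, LinearMap.sum_apply, map_smul, LinearMap.smul_apply, smul_eq_mul] at h0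
      simpa [Matrix.vecMul, dotProduct, gramMatrix, map_sum, Finset.sum_apply,
        smul_eq_mul] using h0
    have hz := Matrix.eq_zero_of_vecMul_eq_zero hdet hcoord
    have h1 : bL.equivFun x = 0 := funext fun i => congrFun hz i
    have h2 := bL.equivFun.injective (by simpa using h1)
    simpa using h2
  -- orbit sums are invariant
  have horb : ∀ x : L, (∑ g : G, ρ g x) ∈ invariantLattice ρ := by
    intro x g
    have h1 : ρ g (∑ h : G, ρ h x) = ∑ h : G, ρ (g * h) x := by
      rw [map_sum]
      exact Finset.sum_congr rfl fun h _ => by rw [map_mul]; rfl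
    rw [h1]
    exact Fintype.sum_equiv (Equiv.mulLeft g) _ _ (fun h => rfl)
  set S : L := ∑ g : G, ρ g w with hS
  set T : L := ∑ g : G, ρ g v with hT
  have hSinv : S ∈ invariantLattice ρ := horb w
  have hTinv : T ∈ invariantLattice ρ := horb v
  -- T is also coinvariant
  have hTco : T ∈ coinvariantLattice B ρ := by
    intro y hy
    rw [hT, map_sum, LinearMap.sum_apply]
    apply Finset.sum_eq_zero
    intro g _
    calc B (ρ g v) y = B (ρ g v) (ρ g y) := by rw [hy g]
      _ = B v y := hisom g v y
      _ = 0 := hv y hy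
  -- hence T = 0
  have hT0 : T = 0 := by
    apply hnd
    intro y
    have hY := horb y
    have h0 : B T (∑ g : G, ρ g y) = 0 := hTco _ hY
    rw [map_sum] at h0
    have h1 : ∀ g : G, B T (ρ g y) = B T y := by
      intro g
      calc B T (ρ g y) = B (ρ g T) (ρ g y) := by rw [hTinv g]
        _ = B T y := hisom g T y
    rw [Finset.sum_congr rfl (fun g _ => h1 g)] at h0
    have hcard : (Fintype.card G : ℤ) ≠ 0 := by
      exact_mod_cast Fintype.card_ne_zero
    have h2 : (Fintype.card G : ℤ) * B T y = 0 := by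
      simpa [Finset.sum_const, nsmul_eq_mul] using h0
    exact (mul_eq_zero.mp h2).resolve_left hcard
  -- p • S = |G| • u
  have hkey : (p : ℤ) • S = (Nat.card G : ℤ) • u := by
    have h1 : (p : ℤ) • S = ∑ g : G, ρ g (u + v) := by
      rw [hS, Finset.smul_sum]
      exact Finset.sum_congr rfl fun g _ => by rw [← map_smul, ← hw]
    have h2 : ∑ g : G, ρ g (u + v) = (Fintype.card G : ℤ) • u + T := by
      rw [hT]
      simp only [map_add]
      rw [Finset.sum_add_distrib]
      congr 1
      simp [hu, Finset.sum_congr rfl fun g _ => hu g, Finset.sum_const, Nat.card_eq_fintype_card]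
    rw [h1, h2, hT0, add_zero, Nat.card_eq_fintype_card]
  -- conclude by contradiction
  by_contra hnp
  have hcop : Nat.Coprime p (Nat.card G) := (Nat.Prime.coprime_iff_not_dvd hp).mpr hnp
  have hicop : IsCoprime (p : ℤ) (Nat.card G : ℤ) := by
    rw [Int.isCoprime_iff_gcd_eq_one]
    exact_mod_cast hcop
  obtain ⟨a, b, hab⟩ := hicop
  have hudecomp : u = (p : ℤ) • (a • u + b • S) := by
    calc u = (a * (p : ℤ) + b * (Nat.card G : ℤ)) • u := by rw [hab, one_smul]
      _ = a • ((p : ℤ) • u) + b • ((Nat.card G : ℤ) • u) := by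
          rw [add_smul, mul_smul, mul_smul]
      _ = a • ((p : ℤ) • u) + b • ((p : ℤ) • S) := by rw [← hkey]
      _ = (p : ℤ) • (a • u + b • S) := by
          rw [smul_add, smul_comm a, smul_comm b]
  have hmem : a • u + b • S ∈ invariantLattice ρ :=
    Submodule.add_mem _ (Submodule.smul_mem _ a hu) (Submodule.smul_mem _ b hSinv)
  have hp1 : (p : ℤ) = 1 := hprim (p : ℤ) (by exact_mod_cast hp.pos) _ hmem hudecomp
  have : p = 1 := by exact_mod_cast hp1
  exact hp.ne_one this
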